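/- Grouping effect bound for the adaptive BerHu penalized least squares: let y ∈ ℝⁿ, X an n×p matrix with columns x₁,…,x_p, λ > 0, L > 0, and positive weights ŵ₁,…,ŵ_p. Let (α̂, β̂, τ̂) minimize Σᵢ(yᵢ − α − xᵢᵀβ)² + λ·τ·(Σⱼ 1/ŵⱼ + Σⱼ ŵⱼ B_L(β̂ⱼ/τ)) over α ∈ ℝ, β ∈ ℝ^p, τ > 0 (with the penalty extended by 0 at (β,τ)=(0,0) and +∞ for τ=0, β≠0). If β̂ᵢ ≠ 0 and β̂ⱼ ≠ 0, then |ŵᵢβ̂ᵢ − ŵⱼβ̂ⱼ| ≤ (2Lτ̂/λ)·‖y‖₂·sqrt(‖xᵢ‖₂² + ‖xⱼ‖₂² − 2C_{i,j}·xᵢᵀxⱼ), where C_{i,j} = min(1, |β̂ⱼ|/(Lτ̂), |β̂ᵢ|/(Lτ̂), |β̂ᵢβ̂ⱼ|/(Lτ̂)²). -/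

import Mathlib

open Finset

noncomputable def berhu (L z : ℝ) : ℝ := if |z| ≤ L then |z| else (z ^ 2 + L ^ 2) / (2 * L)

/-- The adaptive BerHu penalized least squares objective (for τ > 0). -/
noncomputable def berhuObj {n p : ℕ} (y : Fin n → ℝ) (X : Matrix (Fin n) (Fin p) ℝ)
    (lam L : ℝ) (w : Fin p → ℝ) (α : ℝ) (β : Fin p → ℝ) (τ : ℝ) : ℝ :=
  (∑ i, (y i - α - ∑ j, X i j * β j) ^ 2) +
    lam * (τ * ((∑ j, 1 / w j) + ∑ j, w j * berhu L (β j / τ)))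

noncomputable def bsgn (z : ℝ) : ℝ := if 0 < z then 1 else -1

noncomputable def berhuD (L z : ℝ) : ℝ := bsgn z * (1 + max (|z| - L) 0 / L)

lemma berhu_nonneg {L : ℝ} (hL : 0 < L) (z : ℝ) : 0 ≤ berhu L z := by
  unfold berhu; split
  · exact abs_nonneg z
  · positivity

lemma berhu_eq {L : ℝ} (hL : 0 < L) (z : ℝ) :
    berhu L z = |z| + max (|z| - L) 0 ^ 2 / (2 * L) := by
  unfold berhu
  by_cases h : |z| ≤ L
  · rw [if_pos h, max_eq_right (sub_nonpos.2 h)]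
    simp
  · push_neg at h
    rw [if_neg (not_le.2 h), max_eq_left (by linarith)]
    have h2 : |z| ^ 2 = z ^ 2 := sq_abs z
    field_simp
    nlinarith [h2]

lemma hasDerivAt_maxsq (u : ℝ) : HasDerivAt (fun v : ℝ => max v 0 ^ 2) (2 * max u 0) u := by
  rcases lt_trichotomy u 0 with h | h | h
  · have heq : (fun v : ℝ => max v 0 ^ 2) =ᶠ[nhds u] fun _ => (0 : ℝ) := by
      filter_upwards [Iio_mem_nhds h] with v hv
      simp [max_eq_right (le_of_lt (Set.mem_Iio.1 hv))]
    have h2 := (hasDerivAt_const u (0 : ℝ)).congr_of_eventuallyEq heq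
    simpa [max_eq_right h.le] using h2
  · subst h
    have h1 : HasDerivAt (fun v : ℝ => v ^ 2) 0 0 := by
      simpa using hasDerivAt_pow 2 (0 : ℝ)
    have hlit : (fun v : ℝ => v ^ 2) =o[nhds (0 : ℝ)] fun v => v := by
      simpa using hasDerivAt_iff_isLittleO.1 h1
    have hO : (fun v : ℝ => max v 0 ^ 2) =O[nhds (0 : ℝ)] fun v => v ^ 2 := by
      apply Asymptotics.IsBigO.of_bound 1
      filter_upwards with v
      have h2 : max v 0 ≤ |v| := max_le (le_abs_self v) (abs_nonneg v)
      have h3 : max v 0 ^ 2 ≤ |v| ^ 2 := by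
        apply pow_le_pow_left₀ (le_max_right v 0) h2
      simp only [Real.norm_eq_abs, one_mul]
      rw [abs_of_nonneg (by positivity : (0:ℝ) ≤ max v 0 ^ 2), abs_of_nonneg (sq_nonneg v)]
      simpa [sq_abs] using h3
    rw [hasDerivAt_iff_isLittleO]
    simpa using hO.trans_isLittleO hlit
  · have heq : (fun v : ℝ => max v 0 ^ 2) =ᶠ[nhds u] fun v => v ^ 2 := by
      filter_upwards [Ioi_mem_nhds h] with v hv
      simp [max_eq_left (le_of_lt (Set.mem_Ioi.1 hv))]
    have h2 := (hasDerivAt_pow 2 u).congr_of_eventuallyEq heq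
    simpa [max_eq_left h.le] using h2

lemma hasDerivAt_abs' {z : ℝ} (hz : z ≠ 0) : HasDerivAt (fun v : ℝ => |v|) (bsgn z) z := by
  rcases hz.lt_or_gt with h | h
  · simpa [bsgn, not_lt.2 h.le] using hasDerivAt_abs_neg h
  · simpa [bsgn, h] using hasDerivAt_abs_pos h

lemma berhu_hasDerivAt {L z : ℝ} (hL : 0 < L) (hz : z ≠ 0) :
    HasDerivAt (berhu L) (berhuD L z) z := by
  have habs := hasDerivAt_abs' hz
  have h1 : HasDerivAt (fun v : ℝ => |v| - L) (bsgn z) z := habs.sub_const L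
  have hcomp : HasDerivAt (fun v : ℝ => max (|v| - L) 0 ^ 2)
      (2 * max (|z| - L) 0 * bsgn z) z := by
    have h2 := (hasDerivAt_maxsq (|z| - L)).comp z h1
    simpa [Function.comp_def] using h2
  have htot := habs.add (hcomp.div_const (2 * L))
  have heq : berhu L = fun v => |v| + max (|v| - L) 0 ^ 2 / (2 * L) :=
    funext fun v => berhu_eq hL v
  rw [heq]
  refine htot.congr_deriv ?_
  unfold berhuD
  field_simp

lemma berhu_cD {L τ z : ℝ} (hL : 0 < L) (hτ : 0 < τ) :
    L * τ * (min 1 (|z| / (L * τ)) * berhuD L (z / τ)) = z := by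
  have hLτ : 0 < L * τ := mul_pos hL hτ
  have habs : |z / τ| = |z| / τ := by rw [abs_div, abs_of_pos hτ]
  unfold berhuD bsgn
  set s : ℝ := if 0 < z / τ then (1 : ℝ) else -1 with hsdef
  have hs : s * |z| = z := by
    rcases lt_trichotomy z 0 with hz | hz | hz
    · rw [hsdef, if_neg (not_lt.2 (le_of_lt (div_neg_of_neg_of_pos hz hτ))), abs_of_neg hz]
      ring
    · simp [hz]
    · rw [hsdef, if_pos (div_pos hz hτ), abs_of_pos hz]
      ring
  rw [habs]
  by_cases h : |z| / (L * τ) ≤ 1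
  · have hzle : |z| ≤ L * τ := (div_le_one hLτ).1 h
    have h1 : |z| / τ - L ≤ 0 := by
      rw [sub_nonpos, div_le_iff₀ hτ]; linarith
    rw [min_eq_right h, max_eq_right h1]
    have h2 : L * τ * (|z| / (L * τ) * (s * (1 + 0 / L))) = s * |z| := by
      field_simp
      ring
    rw [h2]
    exact hs
  · have hge : (1 : ℝ) ≤ |z| / (L * τ) := le_of_lt (not_le.1 h)
    have hzge : L * τ ≤ |z| := (one_le_div hLτ).1 hge
    have h1 : (0 : ℝ) ≤ |z| / τ - L := by
      rw [sub_nonneg, le_div_iff₀ hτ]; linarith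
    rw [min_eq_left hge, max_eq_left h1]
    have h2 : L * τ * (1 * (s * (1 + (|z| / τ - L) / L))) = s * |z| := by
      field_simp
      ring
    rw [h2]
    exact hs

lemma min_min_eq {a b : ℝ} (ha : 0 ≤ a) (hb : 0 ≤ b) :
    min (min 1 b) (min a (a * b)) = min 1 a * min 1 b := by
  rcases le_total a 1 with ha1 | ha1 <;> rcases le_total b 1 with hb1 | hb1
  · rw [min_eq_right ha1, min_eq_right hb1, min_eq_right (mul_le_of_le_one_right ha hb1)]
    exact min_eq_right (mul_le_of_le_one_left hb ha1)
  · rw [min_eq_right ha1, min_eq_left hb1, min_eq_left (le_mul_of_one_le_right ha hb1),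
      min_eq_right ha1]
    ring
  · rw [min_eq_left ha1, min_eq_right hb1, min_eq_right (mul_le_of_le_one_right ha hb1)]
    rw [min_eq_left (le_mul_of_one_le_left hb ha1)]
    ring
  · rw [min_eq_left ha1, min_eq_left hb1, min_eq_left (le_mul_of_one_le_right ha hb1),
      min_eq_left (by linarith : (1:ℝ) ≤ a)]
    ring

lemma berhu_foc {n p : ℕ} (y : Fin n → ℝ) (X : Matrix (Fin n) (Fin p) ℝ)
    (lam L : ℝ) (hL : 0 < L) (w : Fin p → ℝ)
    (αhat : ℝ) (βhat : Fin p → ℝ) (τhat : ℝ) (hτ : 0 < τhat)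
    (hmin : ∀ β : Fin p → ℝ,
      berhuObj y X lam L w αhat βhat τhat ≤ berhuObj y X lam L w αhat β τhat)
    (k : Fin p) (hk : βhat k ≠ 0) :
    lam * (w k * berhuD L (βhat k / τhat)) =
      2 * ∑ m, X m k * (y m - αhat - ∑ l, X m l * βhat l) := by
  have hτ' : τhat ≠ 0 := hτ.ne'
  set r : Fin n → ℝ := fun m => y m - αhat - ∑ l, X m l * βhat l with hr
  set Q : ℝ := (∑ l, w l * berhu L (βhat l / τhat)) - w k * berhu L (βhat k / τhat) with hQ
  set G : ℝ → ℝ := fun t => (∑ m, (r m - X m k * (t - βhat k)) ^ 2) +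
      lam * (τhat * ((∑ l, 1 / w l) + (Q + w k * berhu L (t / τhat)))) with hG
  have key1 : ∀ (t : ℝ) (m : Fin n), (∑ l, X m l * Function.update βhat k t l) =
      (∑ l, X m l * βhat l) + X m k * (t - βhat k) := by
    intro t m
    have h1 : ∀ l : Fin p, X m l * Function.update βhat k t l =
        X m l * βhat l + (if l = k then X m k * (t - βhat k) else 0) := by
      intro l
      rcases eq_or_ne l k with h | h
      · subst h; simp [Function.update_self]; ring
      · simp [Function.update_of_ne h, h]
    rw [Finset.sum_congr rfl fun l _ => h1 l, Finset.sum_add_distrib,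
      Finset.sum_ite_eq' Finset.univ k]
    simp
  have key2 : ∀ t : ℝ, (∑ l, w l * berhu L (Function.update βhat k t l / τhat)) =
      Q + w k * berhu L (t / τhat) := by
    intro t
    have h1 : ∀ l : Fin p, w l * berhu L (Function.update βhat k t l / τhat) =
        w l * berhu L (βhat l / τhat) +
          (if l = k then w k * berhu L (t / τhat) - w k * berhu L (βhat k / τhat) else 0) := by
      intro l
      rcases eq_or_ne l k with h | h
      · subst h; simp [Function.update_self]
      · simp [Function.update_of_ne h, h]
    rw [Finset.sum_congr rfl fun l _ => h1 l, Finset.sum_add_distrib,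
      Finset.sum_ite_eq' Finset.univ k]
    simp [hQ]
    ring
  have hGeq : ∀ t : ℝ, G t = berhuObj y X lam L w αhat (Function.update βhat k t) τhat := by
    intro t
    rw [hG]
    simp only [berhuObj, key2 t]
    congr 1
    apply Finset.sum_congr rfl
    intro m _
    rw [key1 t m, hr]
    ring
  have hGmin : IsLocalMin G (βhat k) := by
    apply Filter.Eventually.of_forall
    intro t
    have h2 := hmin (Function.update βhat k t)
    rw [hGeq t, hGeq (βhat k), Function.update_eq_self]
    exact h2
  have hd1 : ∀ m : Fin n, HasDerivAt (fun t => (r m - X m k * (t - βhat k)) ^ 2)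
      (2 * r m * (-(X m k))) (βhat k) := by
    intro m
    have h1 : HasDerivAt (fun t => r m - X m k * (t - βhat k)) (-(X m k)) (βhat k) := by
      have h2 := (((hasDerivAt_id (βhat k)).sub_const (βhat k)).const_mul (X m k)).const_sub (r m)
      simpa using h2
    have h3 := h1.fun_pow 2
    norm_num at h3
    simpa using h3
  have hne : βhat k / τhat ≠ 0 := div_ne_zero hk hτ'
  have hd2 : HasDerivAt
      (fun t => lam * (τhat * ((∑ l, 1 / w l) + (Q + w k * berhu L (t / τhat)))))
      (lam * (τhat * (w k * (berhuD L (βhat k / τhat) * (1 / τhat))))) (βhat k) := by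
    have h0 : HasDerivAt (fun t : ℝ => t / τhat) (1 / τhat) (βhat k) := by
      simpa using (hasDerivAt_id (βhat k)).div_const τhat
    have h1 : HasDerivAt (fun t : ℝ => berhu L (t / τhat))
        (berhuD L (βhat k / τhat) * (1 / τhat)) (βhat k) := by
      have h2 := (berhu_hasDerivAt hL hne).comp (βhat k) h0
      simpa [Function.comp_def] using h2
    exact ((((h1.const_mul (w k)).const_add Q).const_add (∑ l, 1 / w l)).const_mul
      τhat).const_mul lam
  have hdG : HasDerivAt G ((∑ m, 2 * r m * (-(X m k))) +
      lam * (τhat * (w k * (berhuD L (βhat k / τhat) * (1 / τhat))))) (βhat k) := by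
    rw [hG]
    exact (HasDerivAt.fun_sum fun m _ => hd1 m).fun_add hd2
  have hzero := hGmin.hasDerivAt_eq_zero hdG
  have h4 : (∑ m, 2 * r m * (-(X m k))) + 2 * ∑ m, X m k * r m = 0 := by
    rw [Finset.mul_sum, ← Finset.sum_add_distrib]
    exact Finset.sum_eq_zero fun m _ => by ring
  have h3 : lam * (τhat * (w k * (berhuD L (βhat k / τhat) * (1 / τhat)))) =
      lam * (w k * berhuD L (βhat k / τhat)) := by
    field_simp
  rw [h3] at hzero
  linarith [hzero, h4]

set_option maxHeartbeats 1000000 in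
theorem berhu_grouping_effect {n p : ℕ} (y : Fin n → ℝ) (X : Matrix (Fin n) (Fin p) ℝ)
    (lam L : ℝ) (hlam : 0 < lam) (hL : 0 < L) (w : Fin p → ℝ) (hw : ∀ j, 0 < w j)
    (αhat : ℝ) (βhat : Fin p → ℝ) (τhat : ℝ) (hτ : 0 < τhat)
    (hmin : ∀ (α : ℝ) (β : Fin p → ℝ) (τ : ℝ), 0 < τ →
      berhuObj y X lam L w αhat βhat τhat ≤ berhuObj y X lam L w α β τ)
    (hmin0 : ∀ α : ℝ, berhuObj y X lam L w αhat βhat τhat ≤ ∑ i, (y i - α) ^ 2)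
    (i j : Fin p) (hi : βhat i ≠ 0) (hj : βhat j ≠ 0) :
    |w i * βhat i - w j * βhat j| ≤
      (2 * L * τhat / lam) * Real.sqrt (∑ i', y i' ^ 2) *
        Real.sqrt ((∑ k, X k i ^ 2) + (∑ k, X k j ^ 2) -
          2 * (min (min 1 (|βhat j| / (L * τhat)))
                (min (|βhat i| / (L * τhat)) (|βhat i * βhat j| / (L * τhat) ^ 2))) *
            ∑ k, X k i * X k j) := by
  have hτ' : τhat ≠ 0 := hτ.ne'
  have hLτ : 0 < L * τhat := mul_pos hL hτ
  -- rewrite the min-expression as a product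
  have hC : min (min 1 (|βhat j| / (L * τhat)))
      (min (|βhat i| / (L * τhat)) (|βhat i * βhat j| / (L * τhat) ^ 2)) =
      min 1 (|βhat i| / (L * τhat)) * min 1 (|βhat j| / (L * τhat)) := by
    have hab : |βhat i * βhat j| / (L * τhat) ^ 2 =
        (|βhat i| / (L * τhat)) * (|βhat j| / (L * τhat)) := by
      rw [abs_mul]; field_simp
    rw [hab]
    exact min_min_eq (div_nonneg (abs_nonneg _) hLτ.le) (div_nonneg (abs_nonneg _) hLτ.le)
  rw [hC]
  set ci : ℝ := min 1 (|βhat i| / (L * τhat)) with hci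
  set cj : ℝ := min 1 (|βhat j| / (L * τhat)) with hcj
  set r : Fin n → ℝ := fun m => y m - αhat - ∑ l, X m l * βhat l with hr
  set f : Fin n → ℝ := fun m => ci * X m i - cj * X m j with hf
  have foci := berhu_foc y X lam L hL w αhat βhat τhat hτ (fun β => hmin αhat β τhat hτ) i hi
  have focj := berhu_foc y X lam L hL w αhat βhat τhat hτ (fun β => hmin αhat β τhat hτ) j hj
  have e1 : L * τhat * (ci * berhuD L (βhat i / τhat)) = βhat i := berhu_cD hL hτ
  have e2 : L * τhat * (cj * berhuD L (βhat j / τhat)) = βhat j := berhu_cD hL hτ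
  have esum : ∑ m, f m * r m =
      ci * (∑ m, X m i * r m) - cj * (∑ m, X m j * r m) := by
    rw [Finset.mul_sum, Finset.mul_sum, ← Finset.sum_sub_distrib]
    exact Finset.sum_congr rfl fun m _ => by rw [hf]; ring
  have hmain : lam * (w i * βhat i - w j * βhat j) =
      2 * L * τhat * ∑ m, f m * r m := by
    calc lam * (w i * βhat i - w j * βhat j)
        = L * τhat * (ci * (lam * (w i * berhuD L (βhat i / τhat))) -
            cj * (lam * (w j * berhuD L (βhat j / τhat)))) := by
          linear_combination (-(lam * w i)) * e1 + lam * w j * e2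
      _ = L * τhat * (ci * (2 * ∑ m, X m i * r m) - cj * (2 * ∑ m, X m j * r m)) := by
          rw [foci, focj]
      _ = 2 * L * τhat * (ci * (∑ m, X m i * r m) - cj * (∑ m, X m j * r m)) := by ring
      _ = 2 * L * τhat * ∑ m, f m * r m := by rw [esum]
  have habs2 : |w i * βhat i - w j * βhat j| =
      2 * L * τhat / lam * |∑ m, f m * r m| := by
    have h1 : w i * βhat i - w j * βhat j = 2 * L * τhat / lam * ∑ m, f m * r m := by
      field_simp
      linear_combination hmain
    have hpos : (0:ℝ) < 2 * L * τhat / lam := div_pos (by positivity) hlam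
    rw [h1, abs_mul, abs_of_pos hpos]
  -- bound on residual norm
  have hr2 : ∑ m, r m ^ 2 ≤ ∑ m, y m ^ 2 := by
    have h0 := hmin0 0
    simp only [berhuObj, sub_zero] at h0
    have hpen : 0 ≤ lam * (τhat * ((∑ l, 1 / w l) + ∑ l, w l * berhu L (βhat l / τhat))) := by
      apply mul_nonneg hlam.le
      apply mul_nonneg hτ.le
      apply add_nonneg
      · exact Finset.sum_nonneg fun l _ => le_of_lt (by simpa using one_div_pos.2 (hw l))
      · exact Finset.sum_nonneg fun l _ => mul_nonneg (hw l).le (berhu_nonneg hL _)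
    have heq : ∑ m, (y m - αhat - ∑ l, X m l * βhat l) ^ 2 = ∑ m, r m ^ 2 := rfl
    rw [heq] at h0
    linarith
  -- bound on f norm
  have hci0 : 0 ≤ ci := le_min zero_le_one (div_nonneg (abs_nonneg _) hLτ.le)
  have hcj0 : 0 ≤ cj := le_min zero_le_one (div_nonneg (abs_nonneg _) hLτ.le)
  have hci1 : ci ≤ 1 := min_le_left _ _
  have hcj1 : cj ≤ 1 := min_le_left _ _
  have hfle : ∑ m, f m ^ 2 ≤
      (∑ m, X m i ^ 2) + (∑ m, X m j ^ 2) - 2 * (ci * cj) * ∑ m, X m i * X m j := by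
    have hpt : ∀ m ∈ Finset.univ, f m ^ 2 ≤
        X m i ^ 2 + X m j ^ 2 - 2 * (ci * cj) * (X m i * X m j) := by
      intro m _
      have hci2 : ci ^ 2 ≤ 1 := by nlinarith [hci0, hci1]
      have hcj2 : cj ^ 2 ≤ 1 := by nlinarith [hcj0, hcj1]
      have e3 : ci ^ 2 * X m i ^ 2 ≤ X m i ^ 2 := mul_le_of_le_one_left (sq_nonneg (X m i)) hci2
      have e4 : cj ^ 2 * X m j ^ 2 ≤ X m j ^ 2 := mul_le_of_le_one_left (sq_nonneg (X m j)) hcj2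
      have hfm : f m = ci * X m i - cj * X m j := rfl
      rw [hfm]
      nlinarith [e3, e4]
    calc ∑ m, f m ^ 2 ≤ ∑ m, (X m i ^ 2 + X m j ^ 2 - 2 * (ci * cj) * (X m i * X m j)) :=
          Finset.sum_le_sum hpt
      _ = (∑ m, X m i ^ 2) + (∑ m, X m j ^ 2) - 2 * (ci * cj) * ∑ m, X m i * X m j := by
          rw [Finset.sum_sub_distrib, Finset.sum_add_distrib, Finset.mul_sum]
  -- Cauchy-Schwarz
  have hcs : |∑ m, f m * r m| ≤
      Real.sqrt (∑ m, f m ^ 2) * Real.sqrt (∑ m, r m ^ 2) := by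
    have h1 := Real.sum_mul_le_sqrt_mul_sqrt Finset.univ f r
    have h2 := Real.sum_mul_le_sqrt_mul_sqrt Finset.univ (fun m => -f m) r
    simp only [neg_mul, Finset.sum_neg_distrib, neg_sq] at h2
    exact abs_le.2 ⟨by linarith, h1⟩
  have step : |∑ m, f m * r m| ≤
      Real.sqrt (∑ m', y m' ^ 2) *
        Real.sqrt ((∑ m, X m i ^ 2) + (∑ m, X m j ^ 2) -
          2 * (ci * cj) * ∑ m, X m i * X m j) := by
    refine hcs.trans ?_
    rw [mul_comm]
    exact mul_le_mul (Real.sqrt_le_sqrt hr2) (Real.sqrt_le_sqrt hfle)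
      (Real.sqrt_nonneg _) (Real.sqrt_nonneg _)
  rw [habs2]
  calc 2 * L * τhat / lam * |∑ m, f m * r m| ≤
      2 * L * τhat / lam * (Real.sqrt (∑ m', y m' ^ 2) *
        Real.sqrt ((∑ m, X m i ^ 2) + (∑ m, X m j ^ 2) -
          2 * (ci * cj) * ∑ m, X m i * X m j)) :=
        mul_le_mul_of_nonneg_left step (div_pos (by positivity) hlam).le
    _ = 2 * L * τhat / lam * Real.sqrt (∑ m', y m' ^ 2) *
        Real.sqrt ((∑ m, X m i ^ 2) + (∑ m, X m j ^ 2) -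
          2 * (ci * cj) * ∑ m, X m i * X m j) := by ring
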